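/- Let α and α' be strategy profiles that agree at every coordinate n ≠ k, with α k > 0 and α' k = 0. Then φ α − φ α' = w k * (Υ k α − V k). -/

import Mathlib

/-- If two profiles differ only at user `k`, with `α k > 0` and `α' k = 0`,
then the change in the potential equals `w k` times `Υ k α - V k`. -/
theorem potential_diff_offload_local (K M : ℕ) (p h : Fin K → ℝ)
    (hp : ∀ k, 0 < p k) (hh : ∀ k, 0 < h k)
    (w : Fin K → ℝ) (hw : ∀ k, w k = p k * h k)
    (V : Fin K → ℝ)
    (Υ : Fin K → (Fin K → Fin (M + 1)) → ℝ)
    (hΥ : ∀ k α, Υ k α =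
      ∑ n ∈ (Finset.univ.erase k).filter (fun n => α n = α k), w n)
    (φ : (Fin K → Fin (M + 1)) → ℝ)
    (hφ : ∀ α, φ α =
      (1 / 2) * ∑ k : Fin K, ∑ n ∈ Finset.univ.erase k,
          w k * w n * (if α n = α k then (1 : ℝ) else 0) * (if 0 < α k then (1 : ℝ) else 0)
      + ∑ k : Fin K, w k * V k * (if α k = 0 then (1 : ℝ) else 0))
    (k : Fin K) (α α' : Fin K → Fin (M + 1))
    (hagree : ∀ n, n ≠ k → α n = α' n)
    (hk : 0 < α k) (hk' : α' k = 0) :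
    φ α - φ α' = w k * (Υ k α - V k) := by
  classical
  have hk0 : α k ≠ 0 := hk.ne'
  rw [hφ, hφ, hΥ]
  set T : ℝ := ∑ n ∈ Finset.univ.erase k, w n * (if α n = α k then (1:ℝ) else 0) with hT
  have hTfilter : ∑ n ∈ (Finset.univ.erase k).filter (fun n => α n = α k), w n = T := by
    rw [hT, Finset.sum_filter]
    apply Finset.sum_congr rfl
    intro n _
    by_cases hn : α n = α k <;> simp [hn]
  -- split the quadratic sums
  have split : ∀ β : Fin K → Fin (M+1),
      ∑ i : Fin K, ∑ n ∈ Finset.univ.erase i,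
        w i * w n * (if β n = β i then (1:ℝ) else 0) * (if 0 < β i then (1:ℝ) else 0)
      = (∑ i ∈ Finset.univ.erase k,
          ((∑ n ∈ (Finset.univ.erase i).erase k,
            w i * w n * (if β n = β i then (1:ℝ) else 0) * (if 0 < β i then (1:ℝ) else 0))
          + w i * w k * (if β k = β i then (1:ℝ) else 0) * (if 0 < β i then (1:ℝ) else 0)))
        + ∑ n ∈ Finset.univ.erase k,
            w k * w n * (if β n = β k then (1:ℝ) else 0) * (if 0 < β k then (1:ℝ) else 0) := by
    intro β
    rw [← Finset.sum_erase_add _ _ (Finset.mem_univ k)]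
    congr 1
    apply Finset.sum_congr rfl
    intro i hi
    have hik : k ∈ Finset.univ.erase i := by
      rw [Finset.mem_erase]
      exact ⟨(Finset.ne_of_mem_erase hi).symm, Finset.mem_univ k⟩
    rw [← Finset.sum_erase_add _ _ hik]
  rw [split α, split α']
  -- compare common parts
  have hcommon : ∀ i ∈ Finset.univ.erase k,
      ∑ n ∈ (Finset.univ.erase i).erase k,
        w i * w n * (if α n = α i then (1:ℝ) else 0) * (if 0 < α i then (1:ℝ) else 0)
      = ∑ n ∈ (Finset.univ.erase i).erase k,
        w i * w n * (if α' n = α' i then (1:ℝ) else 0) * (if 0 < α' i then (1:ℝ) else 0) := by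
    intro i hi
    apply Finset.sum_congr rfl
    intro n hn
    rw [hagree i (Finset.ne_of_mem_erase hi), hagree n (Finset.ne_of_mem_erase hn)]
  -- k-cross terms for α'
  have hzero' : ∀ i ∈ Finset.univ.erase k,
      w i * w k * (if α' k = α' i then (1:ℝ) else 0) * (if 0 < α' i then (1:ℝ) else 0) = 0 := by
    intro i hi
    by_cases h1 : 0 < α' i
    · have : α' k ≠ α' i := by rw [hk']; exact h1.ne
      simp [this]
    · simp [h1]
  -- k-cross terms for α
  have hcross : ∀ i ∈ Finset.univ.erase k,
      w i * w k * (if α k = α i then (1:ℝ) else 0) * (if 0 < α i then (1:ℝ) else 0)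
      = w k * (w i * (if α i = α k then (1:ℝ) else 0)) := by
    intro i hi
    by_cases h1 : α i = α k
    · have : 0 < α i := h1 ▸ hk
      simp [h1, this, hk]
      ring
    · have : α k ≠ α i := fun e => h1 e.symm
      simp [this, h1]
  -- diagonal term for α'
  have hdiag' : ∀ n ∈ Finset.univ.erase k,
      w k * w n * (if α' n = α' k then (1:ℝ) else 0) * (if 0 < α' k then (1:ℝ) else 0) = 0 := by
    intro n _
    simp [hk', lt_irrefl]
  have hdiag : ∀ n ∈ Finset.univ.erase k,
      w k * w n * (if α n = α k then (1:ℝ) else 0) * (if 0 < α k then (1:ℝ) else 0)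
      = w k * (w n * (if α n = α k then (1:ℝ) else 0)) := by
    intro n _
    simp [hk]
  rw [Finset.sum_add_distrib, Finset.sum_add_distrib,
      Finset.sum_congr rfl hcommon, Finset.sum_congr rfl hzero',
      Finset.sum_congr rfl hcross, Finset.sum_congr rfl hdiag',
      Finset.sum_congr rfl hdiag, ← Finset.mul_sum]
  have hlin : ∀ β : Fin K → Fin (M+1),
      ∑ i : Fin K, w i * V i * (if β i = 0 then (1:ℝ) else 0)
      = (∑ i ∈ Finset.univ.erase k, w i * V i * (if β i = 0 then (1:ℝ) else 0))
        + w k * V k * (if β k = 0 then (1:ℝ) else 0) :=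
    fun β => (Finset.sum_erase_add _ _ (Finset.mem_univ k)).symm
  rw [hlin α, hlin α']
  have hlineq : (∑ i ∈ Finset.univ.erase k, w i * V i * (if α i = 0 then (1:ℝ) else 0))
      = ∑ i ∈ Finset.univ.erase k, w i * V i * (if α' i = 0 then (1:ℝ) else 0) := by
    apply Finset.sum_congr rfl
    intro i hi
    rw [hagree i (Finset.ne_of_mem_erase hi)]
  rw [hlineq, hTfilter, ← hT]
  simp only [if_pos hk', if_neg hk0, Finset.sum_const_zero, mul_one, mul_zero, add_zero]
  ring
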